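/- Let A be a C*-algebra and a ∈ A⁺. Define A_a := {x ∈ A : ∃ k > 0, [[ka, x], [x*, ka]] ≥ 0 in M₂(A)}. If a has the order unit property in A, i.e., [[‖x‖·a, x], [x*, ‖x‖·a]] ≥ 0 in M₂(A) for every x ∈ A_a, then A_a is a norm-closed subset of A. -/

import Mathlib

variable {A : Type*} [NonUnitalCStarAlgebra A]

/-- Positivity in the C*-algebra `M₂(A)`: an element of a C*-algebra is positive
iff it is of the form `star y * y`. -/
def M2Pos (m : Matrix (Fin 2) (Fin 2) A) : Prop := ∃ y, m = star y * y
variable [PartialOrder A] [StarOrderedRing A]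

/-! ### Auxiliary material: the positive cone of a non-unital C*-algebra is closed -/

open Unitization in
theorem myConeClosed (B : Type*) [NonUnitalCStarAlgebra B] :
    IsClosed {p : B | ∃ y, p = star y * y} := by
  letI po : PartialOrder (Unitization ℂ B) := CStarAlgebra.spectralOrder _
  haveI hso : StarOrderedRing (Unitization ℂ B) := CStarAlgebra.spectralOrderedRing _
  letI poB : PartialOrder B := PartialOrder.lift (inr : B → Unitization ℂ B) inr_injective
  have hle : ∀ x y : B, x ≤ y ↔ (x : Unitization ℂ B) ≤ (y : Unitization ℂ B) := fun _ _ => Iff.rfl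
  have h_nonneg : ∀ x : B, 0 ≤ x ↔ ∃ s : B, x = star s * s := by
    intro x
    constructor
    · intro hx
      rw [hle, inr_zero] at hx
      obtain ⟨hsa', hsp⟩ := hx
      rw [sub_zero] at hsa' hsp
      have hsa : IsSelfAdjoint x := Unitization.isSelfAdjoint_inr.mp hsa'
      have hspec : ∀ r ∈ quasispectrum ℝ x, 0 ≤ r := by
        rw [Unitization.quasispectrum_eq_spectrum_inr' ℝ ℂ x]
        exact SpectrumRestricts.nnreal_iff.mp hsp
      refine ⟨cfcₙ Real.sqrt x, ?_⟩
      have hs : IsSelfAdjoint (cfcₙ Real.sqrt x) := cfcₙ_predicate Real.sqrt x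
      rw [hs.star_eq, ← cfcₙ_mul Real.sqrt Real.sqrt x]
      conv_lhs => rw [← cfcₙ_id ℝ x hsa]
      exact cfcₙ_congr (fun r hr => (Real.mul_self_sqrt (hspec r hr)).symm)
    · rintro ⟨s, rfl⟩
      rw [hle, inr_zero, inr_mul, inr_star]
      exact star_mul_self_nonneg _
  haveI hsoB : StarOrderedRing B := by
    refine StarOrderedRing.of_nonneg_iff' (fun {x y} h z => ?_) h_nonneg
    rw [hle] at h ⊢
    simpa [inr_add] using add_le_add_left h (z : Unitization ℂ B)
  have hset : {p : B | ∃ y, p = star y * y} = {p : B | 0 ≤ p} := by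
    ext p; exact (h_nonneg p).symm
  rw [hset]
  exact CStarAlgebra.isClosed_nonneg

/-- The set of elements of `M₂(A)` of the form `star y * y` is closed in the product topology. -/
theorem isClosed_M2Pos : IsClosed {m : Matrix (Fin 2) (Fin 2) A | M2Pos m} := by
  have hc : IsClosed {p : CStarMatrix (Fin 2) (Fin 2) A | ∃ y, p = star y * y} :=
    myConeClosed (CStarMatrix (Fin 2) (Fin 2) A)
  have hpre : {m : Matrix (Fin 2) (Fin 2) A | M2Pos m}
      = CStarMatrix.ofMatrix ⁻¹' {p : CStarMatrix (Fin 2) (Fin 2) A | ∃ y, p = star y * y} := rfl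
  rw [hpre]
  exact hc.preimage CStarMatrix.ofMatrixL.continuous

theorem stmt_8 (a : A) (ha : 0 ≤ a)
    (hou : ∀ x ∈ {x : A | ∃ k : ℝ, 0 < k ∧ M2Pos !![k • a, x; star x, k • a]},
      M2Pos !![‖x‖ • a, x; star x, ‖x‖ • a]) :
    IsClosed {x : A | ∃ k : ℝ, 0 < k ∧ M2Pos !![k • a, x; star x, k • a]} := by
  have hF : Continuous fun x : A => !![‖x‖ • a, x; star x, ‖x‖ • a] := by
    apply continuous_pi; intro i
    apply continuous_pi; intro j
    fin_cases i <;> fin_cases j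
    · show Continuous fun x : A => ‖x‖ • a
      exact continuous_norm.smul continuous_const
    · show Continuous fun x : A => x
      exact continuous_id
    · show Continuous fun x : A => star x
      exact continuous_star
    · show Continuous fun x : A => ‖x‖ • a
      exact continuous_norm.smul continuous_const
  have hzero : (0 : A) ∈ {x : A | ∃ k : ℝ, 0 < k ∧ M2Pos !![k • a, x; star x, k • a]} := by
    refine ⟨1, one_pos, ?_⟩
    set b := CFC.sqrt a with hbdef
    have hbsa : IsSelfAdjoint b := IsSelfAdjoint.of_nonneg (CFC.sqrt_nonneg a)
    have hbb : b * b = a := CFC.sqrt_mul_sqrt_self a ha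
    refine ⟨!![b, 0; 0, b], ?_⟩
    have hstar : star !![b, 0; 0, b] = !![b, 0; 0, b] := by
      ext i j
      fin_cases i <;> fin_cases j <;>
        simp [Matrix.conjTranspose_apply, hbsa.star_eq]
    rw [hstar, Matrix.mul_fin_two]
    simp [hbb, one_smul]
  have hset : {x : A | ∃ k : ℝ, 0 < k ∧ M2Pos !![k • a, x; star x, k • a]}
      = (fun x : A => !![‖x‖ • a, x; star x, ‖x‖ • a]) ⁻¹'
        {m : Matrix (Fin 2) (Fin 2) A | M2Pos m} := by
    ext x
    constructor
    · intro hx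
      exact hou x hx
    · intro hx
      by_cases hx0 : x = 0
      · subst hx0; exact hzero
      · exact ⟨‖x‖, norm_pos_iff.mpr hx0, hx⟩
  rw [hset]
  exact isClosed_M2Pos.preimage hF
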